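/- Each elementary imset generates an extreme ray of the cone generated by all elementary imsets: if u is elementary and u = ∑_v k_v·v with k_v ≥ 0 summing over all elementary imsets v, then k_v = 0 for all v ≠ u. -/

import Mathlib

/-- `δ_A : P(N) → ℝ`. -/
def deltaImset {α : Type*} [DecidableEq α] (A : Finset α) : Finset α → ℝ :=
  fun S => if S = A then 1 else 0

/-- Semi-elementary imset `u_{⟨A,B|C⟩}` as a real vector. -/
def semiElemImset {α : Type*} [DecidableEq α] (A B C : Finset α) : Finset α → ℝ :=
  deltaImset (A ∪ B ∪ C) + deltaImset C - deltaImset (A ∪ C) - deltaImset (B ∪ C)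

/-- Index of an elementary imset: `⟨a,b|C⟩` with `a ≠ b`, `a ∉ C`, `b ∉ C`. -/
abbrev ElemIdx (α : Type*) [DecidableEq α] :=
  {t : α × α × Finset α // t.1 ≠ t.2.1 ∧ t.1 ∉ t.2.2 ∧ t.2.1 ∉ t.2.2}

/-- The elementary imset associated to an index. -/
def elemImset {α : Type*} [DecidableEq α] (t : ElemIdx α) : Finset α → ℝ :=
  semiElemImset {t.val.1} {t.val.2.1} t.val.2.2

section Aux
variable {α : Type*} [DecidableEq α]

/-- quadratic indicator functional -/
def mfun (c d : α) : Finset α → ℝ :=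
  fun T => (if c ∈ T then (1:ℝ) else 0) * (if d ∈ T then 1 else 0)

lemma semi_symm (A B C : Finset α) : semiElemImset A B C = semiElemImset B A C := by
  unfold semiElemImset
  rw [Finset.union_comm A B]
  exact sub_right_comm _ _ _

lemma elem_eval (t : ElemIdx α) (S : Finset α) (h1 : t.val.1 ∉ S) (h2 : t.val.2.1 ∉ S) :
    elemImset t S = if S = t.val.2.2 then 1 else 0 := by
  have e1 : S ≠ {t.val.1} ∪ {t.val.2.1} ∪ t.val.2.2 := fun h => h1 (by rw [h]; simp)
  have e1' : S ≠ {t.val.1} ∪ ({t.val.2.1} ∪ t.val.2.2) := fun h => h1 (by rw [h]; simp)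
  have e2 : S ≠ {t.val.1} ∪ t.val.2.2 := fun h => h1 (by rw [h]; simp)
  have e3 : S ≠ {t.val.2.1} ∪ t.val.2.2 := fun h => h2 (by rw [h]; simp)
  simp [elemImset, semiElemImset, deltaImset, e1, e1', e2, e3]
  split_ifs <;> simp_all

variable [Fintype α]

def pr (m f : Finset α → ℝ) : ℝ := ∑ S : Finset α, m S * f S

lemma pr_delta (m : Finset α → ℝ) (A : Finset α) : pr m (deltaImset A) = m A := by
  unfold pr deltaImset
  simp [mul_ite, Finset.sum_ite_eq']

lemma pr_elem (c d : α) (hcd : c ≠ d) (t : ElemIdx α) :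
    pr (mfun c d) (elemImset t) =
      (if c = t.val.1 then 1 else 0) * (if d = t.val.2.1 then 1 else 0) +
      (if c = t.val.2.1 then 1 else 0) * (if d = t.val.1 then 1 else 0) := by
  obtain ⟨⟨a, b, C⟩, hab, haC, hbC⟩ := t
  simp only [ne_eq] at hab haC hbC
  have expand : elemImset ⟨(a,b,C), hab, haC, hbC⟩ =
      fun S => deltaImset ({a} ∪ {b} ∪ C) S + deltaImset C S
        - deltaImset ({a} ∪ C) S - deltaImset ({b} ∪ C) S := by
    funext S; simp [elemImset, semiElemImset]
  rw [expand]
  have hsplit : pr (mfun c d) (fun S => deltaImset ({a} ∪ {b} ∪ C) S + deltaImset C S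
        - deltaImset ({a} ∪ C) S - deltaImset ({b} ∪ C) S)
      = pr (mfun c d) (deltaImset ({a} ∪ {b} ∪ C)) + pr (mfun c d) (deltaImset C)
        - pr (mfun c d) (deltaImset ({a} ∪ C)) - pr (mfun c d) (deltaImset ({b} ∪ C)) := by
    unfold pr
    rw [← Finset.sum_add_distrib, ← Finset.sum_sub_distrib, ← Finset.sum_sub_distrib]
    refine Finset.sum_congr rfl fun S _ => by dsimp only; ring
  rw [hsplit, pr_delta, pr_delta, pr_delta, pr_delta]
  simp only [mfun, Finset.mem_union, Finset.mem_singleton]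
  by_cases h1 : c = a <;> by_cases h2 : c = b <;> by_cases h3 : c ∈ C <;>
    by_cases h4 : d = a <;> by_cases h5 : d = b <;> by_cases h6 : d ∈ C <;>
    simp_all <;> exact hab ‹b = a›.symm

lemma pr_sum (m : Finset α → ℝ) (k : ElemIdx α → ℝ) :
    pr m (∑ t : ElemIdx α, k t • elemImset t) = ∑ t : ElemIdx α, k t * pr m (elemImset t) := by
  unfold pr
  simp only [Finset.sum_apply, Pi.smul_apply, smul_eq_mul, Finset.mul_sum]
  rw [Finset.sum_comm]
  exact Finset.sum_congr rfl fun t _ => Finset.sum_congr rfl fun S _ => by ring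

lemma step1 {t₀ : ElemIdx α} {k : ElemIdx α → ℝ} (hk : ∀ t, 0 ≤ k t)
    (heq : elemImset t₀ = ∑ t : ElemIdx α, k t • elemImset t) (t : ElemIdx α)
    (h : ¬((t.val.1 = t₀.val.1 ∧ t.val.2.1 = t₀.val.2.1) ∨
           (t.val.1 = t₀.val.2.1 ∧ t.val.2.1 = t₀.val.1))) : k t = 0 := by
  have hcd : t.val.1 ≠ t.val.2.1 := t.prop.1
  have hpair := congrArg (pr (mfun t.val.1 t.val.2.1)) heq
  rw [pr_sum, pr_elem _ _ hcd t₀] at hpair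
  have hL : ((if t.val.1 = t₀.val.1 then (1:ℝ) else 0) *
        (if t.val.2.1 = t₀.val.2.1 then 1 else 0) +
      (if t.val.1 = t₀.val.2.1 then 1 else 0) *
        (if t.val.2.1 = t₀.val.1 then 1 else 0)) = 0 := by
    rcases Decidable.em (t.val.1 = t₀.val.1) with h1 | h1 <;>
    rcases Decidable.em (t.val.2.1 = t₀.val.2.1) with h2 | h2 <;>
    rcases Decidable.em (t.val.1 = t₀.val.2.1) with h3 | h3 <;>
    rcases Decidable.em (t.val.2.1 = t₀.val.1) with h4 | h4 <;>
    first
      | exact absurd (Or.inl ⟨‹t.val.1 = t₀.val.1›, ‹t.val.2.1 = t₀.val.2.1›⟩) h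
      | exact absurd (Or.inr ⟨‹t.val.1 = t₀.val.2.1›, ‹t.val.2.1 = t₀.val.1›⟩) h
      | exact absurd (h1.trans h4.symm) hcd
      | exact absurd (h3.trans h2.symm) hcd
      | simp [h1, h2, h3, h4]
  rw [hL] at hpair
  have hnn : ∀ t' ∈ Finset.univ, 0 ≤ k t' * pr (mfun t.val.1 t.val.2.1) (elemImset t') :=
    fun t' _ => mul_nonneg (hk t')
      (by rw [pr_elem _ _ hcd t']; split_ifs <;> norm_num)
  have hz := (Finset.sum_eq_zero_iff_of_nonneg hnn).mp hpair.symm t (Finset.mem_univ t)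
  have hval : pr (mfun t.val.1 t.val.2.1) (elemImset t) = 1 := by
    rw [pr_elem _ _ hcd t]; simp [hcd]
  rw [hval, mul_one] at hz
  exact hz
end Aux

theorem elementary_imset_extreme_ray {α : Type*} [DecidableEq α] [Fintype α]
    (t₀ : ElemIdx α) (k : ElemIdx α → ℝ) (hk : ∀ t, 0 ≤ k t)
    (heq : elemImset t₀ = ∑ t : ElemIdx α, k t • elemImset t) :
    ∀ t : ElemIdx α, elemImset t ≠ elemImset t₀ → k t = 0 := by
  intro t hne
  by_cases hp : (t.val.1 = t₀.val.1 ∧ t.val.2.1 = t₀.val.2.1) ∨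
      (t.val.1 = t₀.val.2.1 ∧ t.val.2.1 = t₀.val.1)
  · have haD : t₀.val.1 ∉ t.val.2.2 := by
      rcases hp with ⟨h1, h2⟩ | ⟨h1, h2⟩
      · exact h1 ▸ t.prop.2.1
      · exact h2 ▸ t.prop.2.2
    have hbD : t₀.val.2.1 ∉ t.val.2.2 := by
      rcases hp with ⟨h1, h2⟩ | ⟨h1, h2⟩
      · exact h2 ▸ t.prop.2.2
      · exact h1 ▸ t.prop.2.1
    have hDC : t.val.2.2 ≠ t₀.val.2.2 := by
      intro hdc
      apply hne
      rcases hp with ⟨h1, h2⟩ | ⟨h1, h2⟩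
      · unfold elemImset; rw [h1, h2, hdc]
      · unfold elemImset; rw [h1, h2, hdc, semi_symm]
    have hD0 := congrFun heq t.val.2.2
    have hL0 : elemImset t₀ t.val.2.2 = 0 := by
      rw [elem_eval t₀ t.val.2.2 haD hbD, if_neg hDC]
    rw [hL0, Finset.sum_apply] at hD0
    simp only [Pi.smul_apply, smul_eq_mul] at hD0
    have hnn : ∀ t' ∈ Finset.univ, 0 ≤ k t' * elemImset t' t.val.2.2 := by
      intro t' _
      by_cases hp' : (t'.val.1 = t₀.val.1 ∧ t'.val.2.1 = t₀.val.2.1) ∨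
          (t'.val.1 = t₀.val.2.1 ∧ t'.val.2.1 = t₀.val.1)
      · have h1D : t'.val.1 ∉ t.val.2.2 := by
          rcases hp' with ⟨h1, _⟩ | ⟨h1, _⟩
          · exact h1 ▸ haD
          · exact h1 ▸ hbD
        have h2D : t'.val.2.1 ∉ t.val.2.2 := by
          rcases hp' with ⟨_, h2⟩ | ⟨_, h2⟩
          · exact h2 ▸ hbD
          · exact h2 ▸ haD
        rw [elem_eval t' _ h1D h2D]
        have := hk t'
        split_ifs <;> simp [this]
      · rw [step1 hk heq t' hp', zero_mul]
    have hz := (Finset.sum_eq_zero_iff_of_nonneg hnn).mp hD0.symm t (Finset.mem_univ t)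
    have hval : elemImset t t.val.2.2 = 1 := by
      rw [elem_eval t _ (t.prop.2.1) (t.prop.2.2), if_pos rfl]
    rw [hval, mul_one] at hz
    exact hz
  · exact step1 hk heq t hp
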